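/- Let d be a bounded operator with d₁ = (d+d*)/2 ≥ 0 and let r ≠ 0 be the projection onto ker(d₁). Then the intersection F_W of the numerical range W(d) with the imaginary axis equals {0} if and only if r d₂ r = 0, where d₂ = (d-d*)/(2i). -/

import Mathlib

open scoped InnerProductSpace

/-- For a positive operator, vanishing of the quadratic form at `x` implies `T x = 0`. -/
lemma isPositive_inner_self_eq_zero
    {H : Type*} [NormedAddCommGroup H] [InnerProductSpace ℂ H] [CompleteSpace H]
    {T : H →L[ℂ] H} (hT : T.IsPositive) {x : H} (hx : ⟪x, T x⟫_ℂ = 0) :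
    T x = 0 := by
  have hsym : ∀ u v : H, ⟪T u, v⟫_ℂ = ⟪u, T v⟫_ℂ := by
    intro u v
    have := hT.isSelfAdjoint
    rw [ContinuousLinearMap.isSelfAdjoint_iff_isSymmetric] at this
    exact this u v
  -- quadratic expansion
  have key : ∀ t : ℝ, 0 ≤ t * t * (⟪T x, T (T x)⟫_ℂ).re + 2 * t * (⟪T x, T x⟫_ℂ).re := by
    intro t
    have h0 := hT.inner_nonneg_right (x + (t : ℂ) • T x)
    have hexp : ⟪x + (t : ℂ) • T x, T (x + (t : ℂ) • T x)⟫_ℂ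
        = ⟪x, T x⟫_ℂ + (t : ℂ) * ⟪x, T (T x)⟫_ℂ + (t : ℂ) * ⟪T x, T x⟫_ℂ
          + (t : ℂ) * (t : ℂ) * ⟪T x, T (T x)⟫_ℂ := by
      simp only [map_add, map_smul, inner_add_left, inner_add_right, inner_smul_left,
        inner_smul_right, Complex.conj_ofReal]
      ring
    have hTx : ⟪x, T (T x)⟫_ℂ = ⟪T x, T x⟫_ℂ := by rw [← hsym]
    rw [hexp, hTx, hx] at h0
    have hc : (t : ℂ) * (t : ℂ) = ((t * t : ℝ) : ℂ) := by push_cast; ring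
    rw [hc] at h0
    have h0 := (Complex.le_def.mp h0).1
    simp only [Complex.zero_re, Complex.add_re, Complex.re_ofReal_mul] at h0
    linarith
  -- conclude the coefficient is zero
  have hre : (⟪T x, T x⟫_ℂ).re = 0 := by
    set a : ℝ := (⟪T x, T (T x)⟫_ℂ).re with ha
    set b : ℝ := (⟪T x, T x⟫_ℂ).re with hb
    have hanon : 0 ≤ a := by
      have h := (Complex.le_def.mp (hT.inner_nonneg_right (T x))).1
      rwa [Complex.zero_re] at h
    have hbnon : 0 ≤ b := inner_self_nonneg (𝕜 := ℂ) (x := T x)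
    by_contra hbne
    have hbpos : 0 < b := lt_of_le_of_ne hbnon (Ne.symm hbne)
    have hkey := key (-(b / (a + 1)))
    have hpos1 : (0:ℝ) < a + 1 := by linarith
    have hne : a + 1 ≠ 0 := ne_of_gt hpos1
    have hkey2 : 0 ≤ (b * b * a - 2 * b * (a + 1) * b) / ((a + 1) * (a + 1)) := by
      rw [div_eq_mul_inv]
      have : -(b / (a + 1)) * -(b / (a + 1)) * a + 2 * -(b / (a + 1)) * b
          = (b * b * a - 2 * b * (a + 1) * b) * ((a + 1) * (a + 1))⁻¹ := by
        field_simp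
        ring
      linarith [hkey, this ▸ hkey]
    have hnum : 0 ≤ b * b * a - 2 * b * (a + 1) * b := by
      simpa using (le_div_iff₀ (mul_pos hpos1 hpos1)).mp hkey2
    nlinarith [mul_pos hbpos hbpos]
  have : ‖T x‖ ^ 2 = 0 := by
    rw [← inner_self_eq_norm_sq (𝕜 := ℂ) (T x)]
    exact hre
  have := pow_eq_zero_iff (n := 2) (by norm_num) |>.mp this
  exact norm_eq_zero.mp this

/-- Let `d` be bounded with real part `d₁ = (d+d*)/2` positive semidefinite and
imaginary part `d₂ = (d-d*)/(2i)`, and suppose the kernel of `d₁` is nonzero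
(so that the projection `r` onto `ker d₁` is nonzero).  Then
`F_W = W(d) ∩ iℝ` equals `{0}` if and only if `r d₂ r = 0`, i.e. if and only if
`⟪x, d₂ y⟫ = 0` for all `x, y ∈ ker d₁`. -/
theorem numericalRange_imaginaryAxis_eq_zero_iff
    {H : Type*} [NormedAddCommGroup H] [InnerProductSpace ℂ H] [CompleteSpace H]
    (d : H →L[ℂ] H)
    (d₁ : H →L[ℂ] H) (hd₁ : d₁ = (2 : ℂ)⁻¹ • (d + ContinuousLinearMap.adjoint d))
    (d₂ : H →L[ℂ] H)
    (hd₂ : d₂ = (2 * Complex.I)⁻¹ • (d - ContinuousLinearMap.adjoint d))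
    (hpos : d₁.IsPositive) (hker : LinearMap.ker (d₁ : H →ₗ[ℂ] H) ≠ ⊥) :
    {z : ℂ | (∃ x : H, ‖x‖ = 1 ∧ ⟪x, d x⟫_ℂ = z) ∧ z.re = 0} = {0} ↔
      ∀ x y : H, x ∈ LinearMap.ker (d₁ : H →ₗ[ℂ] H) → y ∈ LinearMap.ker (d₁ : H →ₗ[ℂ] H) →
        ⟪x, d₂ y⟫_ℂ = 0 := by
  -- decomposition of the inner products
  have hdecomp : ∀ x y : H, ⟪x, d y⟫_ℂ = ⟪x, d₁ y⟫_ℂ + Complex.I * ⟪x, d₂ y⟫_ℂ := by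
    intro x y
    rw [hd₁, hd₂]
    simp only [ContinuousLinearMap.smul_apply, ContinuousLinearMap.add_apply,
      ContinuousLinearMap.sub_apply, inner_smul_right, inner_add_right, inner_sub_right,
      ContinuousLinearMap.adjoint_inner_right]
    have hI : Complex.I ≠ 0 := Complex.I_ne_zero
    field_simp
    ring_nf
  have hre : ∀ x : H, ⟪x, d₁ x⟫_ℂ = ((⟪x, d x⟫_ℂ).re : ℂ) := by
    intro x
    rw [hd₁]
    simp only [ContinuousLinearMap.smul_apply, ContinuousLinearMap.add_apply,
      inner_smul_right, inner_add_right, ContinuousLinearMap.adjoint_inner_right]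
    have hc : ⟪d x, x⟫_ℂ = (starRingEnd ℂ) ⟪x, d x⟫_ℂ := (inner_conj_symm (d x) x).symm
    rw [hc, Complex.add_conj]
    push_cast
    ring
  -- quadratic form of d₂ vanishes on ker d₁ iff sesquilinear does (polarization)
  constructor
  · intro h x y hx hy
    rw [LinearMap.mem_ker, ContinuousLinearMap.coe_coe] at hx hy
    -- first: quadratic form vanishes on the kernel
    have hq : ∀ z : H, d₁ z = 0 → ⟪z, d₂ z⟫_ℂ = 0 := by
      intro z hz
      rcases eq_or_ne z 0 with rfl | hz0
      · simp
      · set u : H := (‖z‖ : ℂ)⁻¹ • z with hu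
        have hnz : (‖z‖ : ℂ) ≠ 0 := by
          simpa using norm_ne_zero_iff.mpr hz0
        have hun : ‖u‖ = 1 := by
          rw [hu, norm_smul]
          simp [norm_ne_zero_iff.mpr hz0]
        have hu_ker : d₁ u = 0 := by rw [hu, map_smul, hz, smul_zero]
        have hval : ⟪u, d u⟫_ℂ = Complex.I * ⟪u, d₂ u⟫_ℂ := by
          rw [hdecomp, hu_ker]
          simp
        have hmem : ⟪u, d u⟫_ℂ ∈
            {w : ℂ | (∃ x : H, ‖x‖ = 1 ∧ ⟪x, d x⟫_ℂ = w) ∧ w.re = 0} := by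
          refine ⟨⟨u, hun, rfl⟩, ?_⟩
          have := hre u
          rw [hu_ker] at this
          simp only [inner_zero_right] at this
          have : ((⟪u, d u⟫_ℂ).re : ℂ) = 0 := this.symm
          exact_mod_cast this
        rw [h] at hmem
        have hu0 : ⟪u, d₂ u⟫_ℂ = 0 := by
          have := hmem
          rw [hval] at this
          exact (mul_eq_zero.mp this).resolve_left Complex.I_ne_zero
        -- scale back
        have : ⟪z, d₂ z⟫_ℂ = (‖z‖ : ℂ) * (‖z‖ : ℂ) * ⟪u, d₂ u⟫_ℂ := by
          rw [hu, map_smul, inner_smul_left, inner_smul_right]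
          have : (starRingEnd ℂ) ((‖z‖ : ℂ)⁻¹) = (‖z‖ : ℂ)⁻¹ := by
            simp [Complex.conj_ofReal]
          rw [this]
          field_simp
        rw [this, hu0, mul_zero]
    -- polarization
    have hpol := inner_map_polarization (d₂ : H →ₗ[ℂ] H) x y
    have hmem : ∀ w : H, d₁ w = 0 → ⟪(d₂ : H →ₗ[ℂ] H) w, w⟫_ℂ = 0 := by
      intro w hw
      have : ⟪w, d₂ w⟫_ℂ = 0 := hq w hw
      have h' := congrArg (starRingEnd ℂ) this
      rw [inner_conj_symm] at h'
      simpa using h'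
    have h1 : d₁ (x + y) = 0 := by rw [map_add, hx, hy, add_zero]
    have h2 : d₁ (x - y) = 0 := by rw [map_sub, hx, hy, sub_zero]
    have h3 : d₁ (x + Complex.I • y) = 0 := by
      rw [map_add, map_smul, hx, hy, smul_zero, add_zero]
    have h4 : d₁ (x - Complex.I • y) = 0 := by
      rw [map_sub, map_smul, hx, hy, smul_zero, sub_zero]
    rw [hmem _ h1, hmem _ h2, hmem _ h3, hmem _ h4] at hpol
    simp only [mul_zero, sub_zero, add_zero, zero_sub, zero_add, neg_zero, zero_div] at hpol
    have h' := congrArg (starRingEnd ℂ) hpol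
    rw [inner_conj_symm] at h'
    simpa using h'
  · intro h
    ext z
    simp only [Set.mem_setOf_eq, Set.mem_singleton_iff]
    constructor
    · rintro ⟨⟨x, hx1, hxz⟩, hzre⟩
      have hq1 : ⟪x, d₁ x⟫_ℂ = 0 := by
        rw [hre x, hxz, hzre]
        simp
      have hker_x : d₁ x = 0 := isPositive_inner_self_eq_zero hpos hq1
      have hx_mem : x ∈ LinearMap.ker (d₁ : H →ₗ[ℂ] H) := LinearMap.mem_ker.mpr hker_x
      have := hdecomp x x
      rw [hxz, h x x hx_mem hx_mem, hker_x] at this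
      simpa using this
    · rintro rfl
      obtain ⟨z, hz_mem, hz0⟩ := Submodule.ne_bot_iff _ |>.mp hker
      have hzker : d₁ z = 0 := LinearMap.mem_ker.mp hz_mem
      set u : H := (‖z‖ : ℂ)⁻¹ • z with hu
      have hun : ‖u‖ = 1 := by
        rw [hu, norm_smul]
        simp [norm_ne_zero_iff.mpr hz0]
      have hu_ker : d₁ u = 0 := by rw [hu, map_smul, hzker, smul_zero]
      have hu_mem : u ∈ LinearMap.ker (d₁ : H →ₗ[ℂ] H) := LinearMap.mem_ker.mpr hu_ker
      refine ⟨⟨u, hun, ?_⟩, by simp⟩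
      rw [hdecomp, hu_ker, h u u hu_mem hu_mem]
      simp
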